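/- Let n ≥ 2 and -1 < w < 1/(n-1). The intersection of the prism Ω = {x ∈ ℝ^n : x_1 ≥ x_2 ≥ ⋯ ≥ x_n ≥ x_1 - √(1+w)} with the hyperplane {x : Σ x_i = 0} is the convex hull of the n points q_0 = 0 and q_k = √(w+1)·((n-k)/n,…,(n-k)/n, -k/n,…,-k/n) (with k entries equal to -k/n) for k = 1,…,n-1, and this (n-1)-dimensional simplex is congruent to c·P_{n-1} where c = √((n-1)(w+1)/n) and P_{n-1} := Q_{n-1}(1/(n-1)). -/

import Mathlib

open Pointwise

private lemma sum_ite_lt_const (N k : ℕ) (hk : k ≤ N) (A B : ℝ) :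
    ∑ j ∈ Finset.range N, (if j < k then A else B) = k * A + ((N:ℝ) - k) * B := by
  rw [Finset.range_eq_Ico, ← Finset.sum_Ico_consecutive _ (Nat.zero_le k) hk,
    Finset.sum_congr rfl (fun j hj => if_pos (Finset.mem_Ico.mp hj).2),
    Finset.sum_congr rfl (fun j hj => if_neg (Nat.not_lt.mpr (Finset.mem_Ico.mp hj).1)),
    Finset.sum_const, Finset.sum_const, Nat.card_Ico, Nat.card_Ico,
    nsmul_eq_mul, nsmul_eq_mul, Nat.cast_sub hk, Nat.sub_zero]

private lemma sum_k_mul_diff (f : ℕ → ℝ) (N : ℕ) :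
    ∑ k ∈ Finset.range N, (k:ℝ) * (f (k-1) - f k)
      = (∑ j ∈ Finset.range N, f j) - N * f (N-1) := by
  induction N with
  | zero => simp
  | succ N ih =>
    rw [Finset.sum_range_succ, ih, Finset.sum_range_succ (f := f), Nat.add_sub_cancel]
    push_cast
    ring

private lemma sum_ite_gt_diff (f : ℕ → ℝ) (j N : ℕ) (hj : j < N) :
    ∑ k ∈ Finset.range N, (if j < k then 1 else 0) * (f (k-1) - f k) = f j - f (N-1) := by
  induction N with
  | zero => omega
  | succ N ih =>
    rw [Finset.sum_range_succ, Nat.add_sub_cancel]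
    rcases Nat.lt_or_ge j N with h | h
    · rw [ih h, if_pos h, one_mul]
      ring
    · have hj' : j = N := by omega
      subst hj'
      rw [if_neg (lt_irrefl _), zero_mul, add_zero, Finset.sum_eq_zero, sub_self]
      intro k hk
      rw [if_neg (by have := Finset.mem_range.mp hk; omega), zero_mul]

private lemma sum_tel_diff (f : ℕ → ℝ) (N : ℕ) :
    ∑ k ∈ Finset.range N, (f (k-1) - f k) = f 0 - f (N-1) := by
  induction N with
  | zero => simp
  | succ N ih =>
    rw [Finset.sum_range_succ, ih, Nat.add_sub_cancel]
    ring


set_option maxHeartbeats 1000000 in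
theorem schobi_cross_section
    (n : ℕ) (hn : 2 ≤ n) (w : ℝ) (hw1 : -1 < w) (hw2 : w < 1 / ((n : ℝ) - 1))
    (Ω : Set (EuclideanSpace ℝ (Fin n)))
    (hΩ : Ω = {x : EuclideanSpace ℝ (Fin n) |
      (∀ i j : Fin n, i ≤ j → x j ≤ x i) ∧
      x ⟨0, by omega⟩ - Real.sqrt (1 + w) ≤ x ⟨n - 1, by omega⟩})
    (q : Fin n → EuclideanSpace ℝ (Fin n))
    (hq : ∀ (k : Fin n) (j : Fin n),
      q k j = Real.sqrt (w + 1) *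
        (if (j : ℕ) < (k : ℕ) then ((n : ℝ) - (k : ℕ)) / n else -((k : ℕ) : ℝ) / n))
    -- the simplex P_{n-1} = Q_{n-1}(1/(n-1)) in its standard realization
    (w' b' a' : ℝ) (hw' : w' = 1 / ((n : ℝ) - 1))
    (hb' : b' = (Real.sqrt (1 - w' * (((n : ℝ) - 1) - 1)) - Real.sqrt (1 + w')) / ((n : ℝ) - 1))
    (ha' : a' = b' + Real.sqrt (1 + w'))
    (v' : Fin (n - 1) → Fin (n - 1) → ℝ)
    (hv' : ∀ i j, v' i j = if i = j then a' else b')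
    (P : Set (EuclideanSpace ℝ (Fin (n - 1))))
    (hP : P = convexHull ℝ (insert (0 : EuclideanSpace ℝ (Fin (n - 1)))
      (Set.range (fun i : Fin (n - 1) =>
        (WithLp.toLp 2 (fun j => ∑ k ∈ Finset.Iic i, v' k j) : EuclideanSpace ℝ (Fin (n - 1)))))))
    (c : ℝ) (hc : c = Real.sqrt (((n : ℝ) - 1) * (w + 1) / n)) :
    (Ω ∩ {x : EuclideanSpace ℝ (Fin n) | (∑ i, x i) = 0}) = convexHull ℝ (Set.range q) ∧
    ∃ f : EuclideanSpace ℝ (Fin (n - 1)) → EuclideanSpace ℝ (Fin n),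
      Isometry f ∧ f '' (c • P) = convexHull ℝ (Set.range q) := by
  obtain ⟨m, rfl⟩ : ∃ m, n = m + 1 := ⟨n - 1, by omega⟩
  have hm : 1 ≤ m := by omega
  have hm0 : ((m:ℝ)) ≠ 0 := by positivity
  set s : ℝ := Real.sqrt (w + 1) with hs_def
  have hw1' : (0:ℝ) < w + 1 := by linarith
  have hs : 0 < s := Real.sqrt_pos.mpr hw1'
  have hs2 : s ^ 2 = w + 1 := Real.sq_sqrt hw1'.le
  have hsqrt1w : Real.sqrt (1 + w) = s := by rw [hs_def, add_comm]
  have hmpos : (0:ℝ) < (m:ℝ) + 1 := by positivity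
  have hq' : ∀ (k j : Fin (m+1)), q k j
      = s * (if (j:ℕ) < (k:ℕ) then ((m:ℝ) + 1 - (k:ℕ)) / ((m:ℝ)+1) else -((k:ℕ):ℝ) / ((m:ℝ)+1)) := by
    intro k j
    rw [hq]
    push_cast
    rfl
  -- membership of the q k in the cross-section
  have hmem : ∀ k : Fin (m+1),
      q k ∈ (Ω ∩ {x : EuclideanSpace ℝ (Fin (m+1)) | (∑ i, x i) = 0}) := by
    intro k
    have hk1 : ((k:ℕ):ℝ) ≤ (m:ℝ) + 1 := by exact_mod_cast k.isLt.le
    refine ⟨?_, ?_⟩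
    · rw [hΩ]
      refine ⟨?_, ?_⟩
      · intro i j hij
        rw [hq' k i, hq' k j]
        have hij' : (i:ℕ) ≤ (j:ℕ) := hij
        by_cases h1 : (j:ℕ) < (k:ℕ)
        · rw [if_pos h1, if_pos (lt_of_le_of_lt hij' h1)]
        · rw [if_neg h1]
          by_cases h2 : (i:ℕ) < (k:ℕ)
          · rw [if_pos h2]
            have hb1 : -((k:ℕ):ℝ) / ((m:ℝ)+1) ≤ ((m:ℝ) + 1 - (k:ℕ)) / ((m:ℝ)+1) := by
              gcongr
              linarith
            exact mul_le_mul_of_nonneg_left hb1 hs.le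
          · rw [if_neg h2]
      · rw [hq' k ⟨0, by omega⟩, hq' k ⟨m + 1 - 1, by omega⟩, hsqrt1w]
        simp only []
        by_cases hk0 : (k:ℕ) = 0
        · rw [hk0]
          norm_num
          linarith
        · have h1 : ((⟨0, by omega⟩ : Fin (m+1)):ℕ) < (k:ℕ) := by
            simp only [Fin.val_mk]; omega
          have h2 : ¬ ((⟨m + 1 - 1, by omega⟩ : Fin (m+1)):ℕ) < (k:ℕ) := by
            simp only [Fin.val_mk]; omega
          rw [if_pos h1, if_neg h2]
          have : s * (((m:ℝ) + 1 - (k:ℕ)) / ((m:ℝ)+1)) - s = s * (-((k:ℕ):ℝ) / ((m:ℝ)+1)) := by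
            field_simp
            ring
          linarith
    · show (∑ i, q k i) = 0
      have e2 : (∑ j : Fin (m+1), q k j)
          = ∑ jj ∈ Finset.range (m+1), (fun jj : ℕ => s * (if jj < (k:ℕ) then ((m:ℝ) + 1 - (k:ℕ)) / ((m:ℝ)+1)
              else -((k:ℕ):ℝ) / ((m:ℝ)+1))) jj := by
        rw [← Fin.sum_univ_eq_sum_range]
        exact Finset.sum_congr rfl fun j _ => hq' k j
      rw [e2]
      simp only []
      rw [← Finset.mul_sum, sum_ite_lt_const (m+1) (k:ℕ) k.isLt.le]
      push_cast
      field_simp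
      ring
  -- convexity of the cross-section
  have hconv : Convex ℝ (Ω ∩ {x : EuclideanSpace ℝ (Fin (m+1)) | (∑ i, x i) = 0}) := by
    rw [hΩ]
    intro x hx y hy a b ha hb hab
    obtain ⟨⟨hx1, hx2⟩, hx3⟩ := hx
    obtain ⟨⟨hy1, hy2⟩, hy3⟩ := hy
    refine ⟨⟨?_, ?_⟩, ?_⟩
    · intro i j hij
      have h1 := hx1 i j hij
      have h2 := hy1 i j hij
      simp only [PiLp.add_apply, PiLp.smul_apply, smul_eq_mul]
      exact add_le_add (mul_le_mul_of_nonneg_left h1 ha) (mul_le_mul_of_nonneg_left h2 hb)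
    · simp only [PiLp.add_apply, PiLp.smul_apply, smul_eq_mul]
      have h1 := mul_le_mul_of_nonneg_left hx2 ha
      have h2 := mul_le_mul_of_nonneg_left hy2 hb
      nlinarith [h1, h2]
    · show (∑ i, (a • x + b • y) i) = 0
      simp only [PiLp.add_apply, PiLp.smul_apply, smul_eq_mul]
      rw [Finset.sum_add_distrib, ← Finset.mul_sum, ← Finset.mul_sum]
      rw [show (∑ i, x i) = 0 from hx3, show (∑ i, y i) = 0 from hy3]
      ring
  -- the cross-section is contained in the convex hull
  have hsub2 : (Ω ∩ {x : EuclideanSpace ℝ (Fin (m+1)) | (∑ i, x i) = 0})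
      ⊆ convexHull ℝ (Set.range q) := by
    intro x hx
    obtain ⟨hxo, hx3⟩ := hx
    rw [hΩ] at hxo
    obtain ⟨hx1, hx2⟩ := hxo
    have hx3' : (∑ i, x i) = 0 := hx3
    set X : ℕ → ℝ := fun j => x ⟨min j m, by omega⟩ with hX_def
    have hXval : ∀ (j : Fin (m+1)), X (j:ℕ) = x j := by
      intro j
      show x ⟨min (j:ℕ) m, _⟩ = x j
      exact congrArg _ (Fin.ext (show min (j:ℕ) m = j by omega))
    have hXanti : ∀ a b : ℕ, a ≤ b → X b ≤ X a := by
      intro a b hab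
      exact hx1 _ _ (by simp only [Fin.mk_le_mk]; omega)
    have hXsum : ∑ j ∈ Finset.range (m+1), X j = 0 := by
      rw [← Fin.sum_univ_eq_sum_range X (m+1)]
      rw [Finset.sum_congr rfl (fun j _ => hXval j)]
      exact hx3'
    have hgap : X 0 - X m ≤ s := by
      have h2 := hx2
      rw [hsqrt1w] at h2
      have e0 : X 0 = x ⟨0, by omega⟩ := hXval ⟨0, by omega⟩
      have em : X m = x ⟨m + 1 - 1, by omega⟩ := hXval ⟨m + 1 - 1, by omega⟩
      linarith
    set lam : ℕ → ℝ := fun k => if k = 0 then 1 - (X 0 - X m)/s else (X (k-1) - X k)/s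
      with hlam_def
    have hlam_nn : ∀ k, 0 ≤ lam k := by
      intro k
      simp only [hlam_def]
      split
      · have h1 : (X 0 - X m)/s ≤ 1 := by
          rw [div_le_one hs]
          linarith
        linarith
      · apply div_nonneg _ hs.le
        have := hXanti (k-1) k (Nat.sub_le k 1)
        linarith
    have hlam_sum : ∑ k ∈ Finset.range (m+1), lam k = 1 := by
      rw [Finset.sum_range_succ']
      have e3 : ∀ i ∈ Finset.range m, lam (i+1) = (X i - X (i+1))/s := by
        intro i _
        simp only [hlam_def]
        rw [if_neg (Nat.succ_ne_zero i), Nat.add_sub_cancel]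
      rw [Finset.sum_congr rfl e3, ← Finset.sum_div, Finset.sum_range_sub' X m]
      simp only [hlam_def, if_pos rfl]
      ring
    have hrep : x = ∑ k : Fin (m+1), lam (k:ℕ) • q k := by
      ext j
      have happly : (∑ k : Fin (m+1), lam (k:ℕ) • q k) j
          = ∑ k : Fin (m+1), lam (k:ℕ) * q k j := by
        rw [WithLp.ofLp_sum, Finset.sum_apply]
        rfl
      rw [happly]
      have e4 : (∑ k : Fin (m+1), lam (k:ℕ) * q k j)
          = ∑ kk ∈ Finset.range (m+1), (fun kk : ℕ => lam kk * (s * (if (j:ℕ) < kk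
              then ((m:ℝ) + 1 - kk) / ((m:ℝ)+1) else -(kk:ℝ) / ((m:ℝ)+1)))) kk := by
        rw [← Fin.sum_univ_eq_sum_range]
        refine Finset.sum_congr rfl fun k _ => ?_
        rw [hq' k j]
      rw [e4]
      simp only []
      have hsplit : ∀ kk ∈ Finset.range (m+1),
          lam kk * (s * (if (j:ℕ) < kk then ((m:ℝ) + 1 - kk) / ((m:ℝ)+1) else -(kk:ℝ) / ((m:ℝ)+1)))
          = (-s/((m:ℝ)+1)) * ((kk:ℝ) * lam kk)
            + (if (j:ℕ) < kk then 1 else 0) * (X (kk-1) - X kk) := by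
        intro kk _
        rcases Nat.eq_zero_or_pos kk with h0 | hpos
        · subst h0
          simp
        · have hlamk : lam kk = (X (kk-1) - X kk)/s := by
            simp only [hlam_def]
            rw [if_neg (by omega)]
          rw [hlamk]
          by_cases hjk : (j:ℕ) < kk
          · rw [if_pos hjk, if_pos hjk]
            field_simp
            ring
          · rw [if_neg hjk, if_neg hjk]
            field_simp
            ring
      rw [Finset.sum_congr rfl hsplit, Finset.sum_add_distrib, ← Finset.mul_sum]
      have h1 : ∑ kk ∈ Finset.range (m+1), (kk:ℝ) * lam kk
          = (1/s) * (-(((m:ℝ)+1) * X m)) := by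
        have e5 : ∀ kk ∈ Finset.range (m+1),
            (kk:ℝ) * lam kk = (1/s) * ((kk:ℝ) * (X (kk-1) - X kk)) := by
          intro kk _
          rcases Nat.eq_zero_or_pos kk with h0 | hpos
          · subst h0; simp
          · simp only [hlam_def]
            rw [if_neg (by omega)]
            field_simp
        rw [Finset.sum_congr rfl e5, ← Finset.mul_sum, sum_k_mul_diff X (m+1), hXsum,
          Nat.add_sub_cancel]
        push_cast
        ring
      have h2 : ∑ kk ∈ Finset.range (m+1), (if (j:ℕ) < kk then 1 else 0) * (X (kk-1) - X kk)
          = X (j:ℕ) - X m := by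
        rw [sum_ite_gt_diff X (j:ℕ) (m+1) j.isLt, Nat.add_sub_cancel]
      rw [h1, h2, ← hXval j]
      field_simp
      ring
    rw [hrep]
    refine (convex_convexHull ℝ (Set.range q)).sum_mem (fun k _ => hlam_nn (k:ℕ)) ?_
      (fun k _ => subset_convexHull ℝ _ (Set.mem_range_self k))
    rw [Fin.sum_univ_eq_sum_range lam (m+1)]
    exact hlam_sum
  have hpart1 : (Ω ∩ {x : EuclideanSpace ℝ (Fin (m+1)) | (∑ i, x i) = 0})
      = convexHull ℝ (Set.range q) :=
    Set.Subset.antisymm hsub2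
      (convexHull_min (Set.range_subset_iff.mpr hmem) hconv)
  -- ===== Part 2 =====
  have hm1 : ((m+1 : ℕ):ℝ) - 1 = (m:ℝ) := by push_cast; ring
  rw [hm1] at hw' hb' hc
  push_cast at hc
  have hmpos' : (0:ℝ) < (m:ℝ) := by exact_mod_cast hm
  obtain ⟨u, hu_def⟩ : ∃ u : ℝ, u = Real.sqrt (m:ℝ) := ⟨_, rfl⟩
  obtain ⟨r, hr_def⟩ : ∃ r : ℝ, r = Real.sqrt ((m:ℝ)+1) := ⟨_, rfl⟩
  have hupos : 0 < u := hu_def ▸ Real.sqrt_pos.mpr hmpos'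
  have hrpos : 0 < r := hr_def ▸ Real.sqrt_pos.mpr hmpos
  have hu2 : u^2 = (m:ℝ) := hu_def ▸ Real.sq_sqrt hmpos'.le
  have hr2 : r^2 = (m:ℝ)+1 := hr_def ▸ Real.sq_sqrt hmpos.le
  have hmu : (m:ℝ) = r^2 - 1 := by linarith
  have hrne : r ≠ 0 := ne_of_gt hrpos
  have hune : u ≠ 0 := ne_of_gt hupos
  have hr21ne : r^2 - 1 ≠ 0 := by rw [← hmu]; exact ne_of_gt hmpos'
  have ht : Real.sqrt (1 - w' * ((m:ℝ) - 1)) = 1/u := by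
    rw [show 1 - w' * ((m:ℝ) - 1) = 1/(m:ℝ) by rw [hw']; field_simp; ring]
    rw [one_div, one_div, Real.sqrt_inv, ← hu_def]
  have hsp : Real.sqrt (1 + w') = r/u := by
    rw [show 1 + w' = ((m:ℝ)+1)/(m:ℝ) by rw [hw']; field_simp]
    rw [Real.sqrt_div (by positivity), ← hu_def, ← hr_def]
  rw [ht, hsp] at hb'
  rw [hsp] at ha'
  have hcu : c = s*u/r := by
    rw [hc, show ((m:ℝ)) * (w + 1) / ((m:ℝ)+1) = (s*u/r)^2 by
      rw [div_pow, mul_pow, hs2, hu2, hr2]; ring]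
    exact Real.sqrt_sq (by positivity)
  obtain ⟨β, hβ_def⟩ : ∃ b : ℝ, b = (1/r - 1)/(m:ℝ) := ⟨_, rfl⟩
  obtain ⟨δ, hδ_def⟩ : ∃ d : ℝ, d = -(1/r) := ⟨_, rfl⟩
  obtain ⟨F, hF_app⟩ : ∃ F : EuclideanSpace ℝ (Fin m) →ₗ[ℝ] EuclideanSpace ℝ (Fin (m+1)),
      ∀ y, F y = WithLp.toLp 2 (Fin.snoc (fun j : Fin m => β * (∑ i, y i) + y j) (δ * (∑ i, y i))) := by
    refine ⟨{
      toFun := fun y => WithLp.toLp 2 (Fin.snoc (fun j : Fin m => β * (∑ i, y i) + y j) (δ * (∑ i, y i)))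
      map_add' := by
        intro y z
        ext j
        refine Fin.lastCases ?_ (fun jj => ?_) j
        · simp only [WithLp.ofLp_toLp, Fin.snoc_last, PiLp.add_apply, Finset.sum_add_distrib]
          ring
        · simp only [WithLp.ofLp_toLp, Fin.snoc_castSucc, PiLp.add_apply, Finset.sum_add_distrib]
          ring
      map_smul' := by
        intro a y
        ext j
        refine Fin.lastCases ?_ (fun jj => ?_) j
        · simp only [WithLp.ofLp_toLp, Fin.snoc_last, PiLp.smul_apply, smul_eq_mul, RingHom.id_apply,
            ← Finset.mul_sum]
          ring
        · simp only [WithLp.ofLp_toLp, Fin.snoc_castSucc, PiLp.smul_apply, smul_eq_mul, RingHom.id_apply,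
            ← Finset.mul_sum]
          ring }, fun y => rfl⟩
  have hbid : (m:ℝ)*β^2 + 2*β + δ^2 = 0 := by
    rw [hβ_def, hδ_def, hmu]
    field_simp
    ring
  have hFnorm : ∀ y : EuclideanSpace ℝ (Fin m), ‖F y‖ = ‖y‖ := by
    intro y
    rw [EuclideanSpace.norm_eq, EuclideanSpace.norm_eq]
    congr 1
    have happ1 : ∀ jj : Fin m, F y (Fin.castSucc jj) = β * (∑ i, y i) + y jj := by
      intro jj
      simp only [hF_app, WithLp.ofLp_toLp, Fin.snoc_castSucc]
    have happ2 : F y (Fin.last m) = δ * (∑ i, y i) := by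
      simp only [hF_app, WithLp.ofLp_toLp, Fin.snoc_last]
    rw [Fin.sum_univ_castSucc]
    simp only [happ1, happ2, Real.norm_eq_abs, sq_abs]
    have expand : ∀ i : Fin m, (β * (∑ i, y i) + y i)^2
        = β^2 * (∑ i, y i)^2 + (2*β*(∑ i, y i)) * y i + (y i)^2 := fun i => by ring
    rw [Finset.sum_congr rfl (fun i _ => expand i), Finset.sum_add_distrib,
      Finset.sum_add_distrib, Finset.sum_const, ← Finset.mul_sum, Finset.card_univ,
      Fintype.card_fin, nsmul_eq_mul]
    linear_combination ((∑ i, y i)^2) * hbid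
  -- row sums of v'
  have hrow : ∀ k : Fin m, (∑ j : Fin m, v' k j) = a' + ((m:ℝ)-1)*b' := by
    intro k
    have e : ∀ j : Fin m, v' k j = b' + (if k = j then a'-b' else 0) := by
      intro j
      rw [hv']
      by_cases h : k = j
      · rw [if_pos h, if_pos h]; ring
      · rw [if_neg h, if_neg h]; ring
    rw [Finset.sum_congr rfl (fun j _ => e j), Finset.sum_add_distrib, Finset.sum_const,
      Finset.card_univ, Fintype.card_fin, Finset.sum_ite_eq, if_pos (Finset.mem_univ k),
      nsmul_eq_mul]
    ring
  have hSp : ∀ i : Fin m, (∑ j : Fin m, (∑ k ∈ Finset.Iic i, v' k j))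
      = ((i:ℕ)+1 : ℝ) * (a' + ((m:ℝ)-1)*b') := by
    intro i
    rw [Finset.sum_comm, Finset.sum_congr rfl (fun k _ => hrow k), Finset.sum_const,
      Fin.card_Iic, nsmul_eq_mul]
    push_cast
    ring
  have hpij : ∀ i j : Fin m, (∑ k ∈ Finset.Iic i, v' k j)
      = if (j:ℕ) ≤ (i:ℕ) then a' + ((i:ℕ):ℝ)*b' else (((i:ℕ):ℝ)+1)*b' := by
    intro i j
    by_cases hji : (j:ℕ) ≤ (i:ℕ)
    · rw [if_pos hji]
      have e : ∀ k ∈ Finset.Iic i, v' k j = b' + (if k = j then a'-b' else 0) := by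
        intro k _
        rw [hv']
        by_cases h : k = j
        · rw [if_pos h, if_pos h]; ring
        · rw [if_neg h, if_neg h]; ring
      rw [Finset.sum_congr rfl e, Finset.sum_add_distrib, Finset.sum_const, Fin.card_Iic,
        Finset.sum_ite_eq', if_pos (Finset.mem_Iic.mpr (Fin.le_def.mpr hji)), nsmul_eq_mul]
      push_cast
      ring
    · rw [if_neg hji]
      have e : ∀ k ∈ Finset.Iic i, v' k j = b' := by
        intro k hk
        have hk' : (k:ℕ) ≤ (i:ℕ) := Fin.le_def.mp (Finset.mem_Iic.mp hk)
        rw [hv', if_neg (by intro h; rw [h] at hk'; omega)]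
      rw [Finset.sum_congr rfl e, Finset.sum_const, Fin.card_Iic, nsmul_eq_mul]
      push_cast
      ring
  -- the vertex map
  have hvert : ∀ i : Fin m,
      F (c • (WithLp.toLp 2 (fun j => ∑ k ∈ Finset.Iic i, v' k j) : EuclideanSpace ℝ (Fin m)))
        = q (Fin.succ i) := by
    intro i
    rw [map_smul]
    ext j
    have hppp : ∀ jj : Fin (m+1),
        (c • F (WithLp.toLp 2 (fun j => ∑ k ∈ Finset.Iic i, v' k j) : EuclideanSpace ℝ (Fin m))) jj
        = c * F (WithLp.toLp 2 (fun j => ∑ k ∈ Finset.Iic i, v' k j) : EuclideanSpace ℝ (Fin m)) jj := by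
      intro jj
      rw [PiLp.smul_apply, smul_eq_mul]
    refine Fin.lastCases ?_ (fun jj => ?_) j
    · rw [hppp, hq']
      have hcond : ¬ ((Fin.last m : Fin (m+1)):ℕ) < ((Fin.succ i : Fin (m+1)):ℕ) := by
        simp only [Fin.val_last, Fin.val_succ]
        omega
      rw [if_neg hcond]
      have happ2 : F (WithLp.toLp 2 (fun j => ∑ k ∈ Finset.Iic i, v' k j) : EuclideanSpace ℝ (Fin m))
          (Fin.last m) = δ * (∑ jj : Fin m, (∑ k ∈ Finset.Iic i, v' k jj)) := by
        simp only [hF_app, WithLp.ofLp_toLp, Fin.snoc_last]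
      rw [happ2, hSp i, Fin.val_succ]
      rw [hcu, hδ_def, ha', hb', hmu]
      push_cast
      field_simp
      ring
    · rw [hppp, hq']
      have happ1 : F (WithLp.toLp 2 (fun j => ∑ k ∈ Finset.Iic i, v' k j) : EuclideanSpace ℝ (Fin m))
          (Fin.castSucc jj)
          = β * (∑ jjj : Fin m, (∑ k ∈ Finset.Iic i, v' k jjj)) + (∑ k ∈ Finset.Iic i, v' k jj) := by
        simp only [hF_app, WithLp.ofLp_toLp, Fin.snoc_castSucc]
      rw [happ1, hSp i, hpij i jj]
      simp only [Fin.coe_castSucc, Fin.val_succ]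
      by_cases hji : (jj:ℕ) ≤ (i:ℕ)
      · rw [if_pos hji, if_pos (by omega)]
        rw [hcu, hβ_def, ha', hb', hmu]
        push_cast
        field_simp
        ring
      · rw [if_neg hji, if_neg (by omega)]
        rw [hcu, hβ_def, ha', hb', hmu]
        push_cast
        field_simp
        ring
  have hq0 : q 0 = 0 := by
    ext j
    rw [hq' 0 j]
    simp
  have hP2 : P = convexHull ℝ (insert (0 : EuclideanSpace ℝ (Fin m))
      (Set.range (fun i : Fin m =>
        (WithLp.toLp 2 (fun j => ∑ k ∈ Finset.Iic i, v' k j) : EuclideanSpace ℝ (Fin m))))) := hP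
  refine ⟨hpart1, ⟨F, AddMonoidHomClass.isometry_of_norm F hFnorm, ?_⟩⟩
  show ⇑F '' (c • P) = convexHull ℝ (Set.range q)
  rw [hP2, ← convexHull_smul]
  refine (LinearMap.image_convexHull F _).trans ?_
  congr 1
  rw [Set.smul_set_insert, smul_zero, Set.image_insert_eq, map_zero,
    Set.smul_set_range, ← Set.range_comp]
  rw [Fin.range_fin_succ q, hq0]
  congr 1
  have hfun : (⇑F ∘ fun i : Fin m => c • (WithLp.toLp 2 (fun j => ∑ k ∈ Finset.Iic i, v' k j) : EuclideanSpace ℝ (Fin m)))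
      = Fin.tail q := by
    funext i
    exact hvert i
  rw [hfun]
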